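/- arXiv:2603.18938 — 2 statements merged into one kernel-verified Lean document; each statement's English description precedes it below -/
import Mathlib

section
/- Let (Ω, ℱ, P) be a probability space, W : Ω → ℝ^d measurable, p : ℝ^d → (0,1] measurable, and ξ : Ω → {0,1} a random indicator with E[ξ | σ(W)] = p(W) almost surely. Assume ‖W‖₂⁴ / p(W) is integrable and W Wᵀ is integrable entrywise, and set Γ := E[W Wᵀ] and H := (ξ / p(W)) · W Wᵀ. Then E‖H − Γ‖_F² = E[‖W‖₂⁴ / p(W)] − ‖Γ‖_F². Consequently, if p(w) ≥ p⋆ > 0 for all w and E‖W‖₂⁴ ≤ M₄, then E‖H − Γ‖_F² ≤ M₄ / p⋆. -/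
open MeasureTheory
open scoped ENNReal NNReal


theorem trim_eq_aux {Ω : Type*} [MeasurableSpace Ω] (P : Measure Ω) [IsProbabilityMeasure P]
    {d : ℕ} (W : Ω → Fin d → ℝ) (hW : Measurable W)
    (p : (Fin d → ℝ) → ℝ) (hp : Measurable p) (hp_mem : ∀ w, p w ∈ Set.Ioc (0 : ℝ) 1)
    (ξ : Ω → ℝ) (hξ : Measurable ξ) (hξ01 : ∀ ω, ξ ω = 0 ∨ ξ ω = 1)
    (hcond : P[ξ | MeasurableSpace.comap W inferInstance] =ᵐ[P] fun ω => p (W ω)) :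
    (P.withDensity (fun ω => ((ξ ω).toNNReal : ℝ≥0∞))).trim hW.comap_le
      = (P.withDensity (fun ω => ((p (W ω)).toNNReal : ℝ≥0∞))).trim hW.comap_le := by
  have hm : MeasurableSpace.comap W inferInstance ≤ ‹MeasurableSpace Ω› := hW.comap_le
  have hξ0 : ∀ ω, 0 ≤ ξ ω := fun ω => by rcases hξ01 ω with h | h <;> simp [h]
  have hξint : Integrable ξ P := by
    refine Integrable.mono' (integrable_const 1) hξ.aestronglyMeasurable ?_
    exact Filter.Eventually.of_forall fun ω => by
      rcases hξ01 ω with h | h <;> simp [h]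
  have hpWint : Integrable (fun ω => p (W ω)) P := by
    refine Integrable.mono' (integrable_const 1) (hp.comp hW).aestronglyMeasurable ?_
    exact Filter.Eventually.of_forall fun ω => by
      have := hp_mem (W ω)
      rw [Real.norm_eq_abs, abs_of_nonneg this.1.le]; exact this.2
  refine @Measure.ext Ω (MeasurableSpace.comap W inferInstance) _ _ (fun s hs => ?_)
  rw [trim_measurableSet_eq hW.comap_le hs, trim_measurableSet_eq hW.comap_le hs]
  have hs0 : MeasurableSet s := hm s hs
  rw [withDensity_apply _ hs0, withDensity_apply _ hs0]
  have h1 : ∫⁻ ω in s, ((ξ ω).toNNReal : ℝ≥0∞) ∂P = ENNReal.ofReal (∫ ω in s, ξ ω ∂P) :=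
    (ofReal_integral_eq_lintegral_ofReal hξint.restrict
      (Filter.Eventually.of_forall hξ0)).symm
  have h2 : ∫⁻ ω in s, ((p (W ω)).toNNReal : ℝ≥0∞) ∂P
      = ENNReal.ofReal (∫ ω in s, p (W ω) ∂P) :=
    (ofReal_integral_eq_lintegral_ofReal hpWint.restrict
      (Filter.Eventually.of_forall fun ω => (hp_mem (W ω)).1.le)).symm
  rw [h1, h2]
  congr 1
  have h3 := setIntegral_condExp hm hξint hs
  calc ∫ ω in s, ξ ω ∂P = ∫ ω in s, (P[ξ | MeasurableSpace.comap W inferInstance]) ω ∂P :=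
        h3.symm
    _ = ∫ ω in s, p (W ω) ∂P := integral_congr_ae (ae_restrict_of_ae hcond)

theorem tower_aux {Ω : Type*} [MeasurableSpace Ω] (P : Measure Ω) [IsProbabilityMeasure P]
    {d : ℕ} (W : Ω → Fin d → ℝ) (hW : Measurable W)
    (p : (Fin d → ℝ) → ℝ) (hp : Measurable p) (hp_mem : ∀ w, p w ∈ Set.Ioc (0 : ℝ) 1)
    (ξ : Ω → ℝ) (hξ : Measurable ξ) (hξ01 : ∀ ω, ξ ω = 0 ∨ ξ ω = 1)
    (hcond : P[ξ | MeasurableSpace.comap W inferInstance] =ᵐ[P] fun ω => p (W ω))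
    {f : Ω → ℝ}
    (hf : StronglyMeasurable[MeasurableSpace.comap W inferInstance] f) :
    ∫ ω, ξ ω * f ω ∂P = ∫ ω, p (W ω) * f ω ∂P := by
  have hξ0 : ∀ ω, 0 ≤ ξ ω := fun ω => by rcases hξ01 ω with h | h <;> simp [h]
  have hξnn : Measurable fun ω => (ξ ω).toNNReal := measurable_real_toNNReal.comp hξ
  have hpnn : Measurable fun ω => (p (W ω)).toNNReal :=
    measurable_real_toNNReal.comp (hp.comp hW)
  have e1 : ∫ ω, ξ ω * f ω ∂P
      = ∫ ω, f ω ∂(P.withDensity (fun ω => ((ξ ω).toNNReal : ℝ≥0∞))) := by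
    rw [integral_withDensity_eq_integral_smul hξnn]
    congr 1; funext ω
    rw [NNReal.smul_def, smul_eq_mul, Real.coe_toNNReal _ (hξ0 ω)]
  have e2 : ∫ ω, p (W ω) * f ω ∂P
      = ∫ ω, f ω ∂(P.withDensity (fun ω => ((p (W ω)).toNNReal : ℝ≥0∞))) := by
    rw [integral_withDensity_eq_integral_smul hpnn]
    congr 1; funext ω
    rw [NNReal.smul_def, smul_eq_mul, Real.coe_toNNReal _ (hp_mem (W ω)).1.le]
  rw [e1, e2, integral_trim hW.comap_le hf, integral_trim hW.comap_le hf,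
    trim_eq_aux P W hW p hp hp_mem ξ hξ hξ01 hcond]

theorem ltower_aux {Ω : Type*} [MeasurableSpace Ω] (P : Measure Ω) [IsProbabilityMeasure P]
    {d : ℕ} (W : Ω → Fin d → ℝ) (hW : Measurable W)
    (p : (Fin d → ℝ) → ℝ) (hp : Measurable p) (hp_mem : ∀ w, p w ∈ Set.Ioc (0 : ℝ) 1)
    (ξ : Ω → ℝ) (hξ : Measurable ξ) (hξ01 : ∀ ω, ξ ω = 0 ∨ ξ ω = 1)
    (hcond : P[ξ | MeasurableSpace.comap W inferInstance] =ᵐ[P] fun ω => p (W ω))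
    {g : Ω → ℝ≥0∞}
    (hg : Measurable[MeasurableSpace.comap W inferInstance] g) :
    ∫⁻ ω, ENNReal.ofReal (ξ ω) * g ω ∂P = ∫⁻ ω, ENNReal.ofReal (p (W ω)) * g ω ∂P := by
  have hm : MeasurableSpace.comap W inferInstance ≤ ‹MeasurableSpace Ω› := hW.comap_le
  have hgm : Measurable g := hg.mono hm le_rfl
  have hξnn : Measurable fun ω => ((ξ ω).toNNReal : ℝ≥0∞) :=
    (measurable_real_toNNReal.comp hξ).coe_nnreal_ennreal
  have hpnn : Measurable fun ω => ((p (W ω)).toNNReal : ℝ≥0∞) :=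
    (measurable_real_toNNReal.comp (hp.comp hW)).coe_nnreal_ennreal
  have e1 : ∫⁻ ω, ENNReal.ofReal (ξ ω) * g ω ∂P
      = ∫⁻ ω, g ω ∂(P.withDensity (fun ω => ((ξ ω).toNNReal : ℝ≥0∞))) := by
    rw [lintegral_withDensity_eq_lintegral_mul P hξnn hgm]; rfl
  have e2 : ∫⁻ ω, ENNReal.ofReal (p (W ω)) * g ω ∂P
      = ∫⁻ ω, g ω ∂(P.withDensity (fun ω => ((p (W ω)).toNNReal : ℝ≥0∞))) := by
    rw [lintegral_withDensity_eq_lintegral_mul P hpnn hgm]; rfl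
  rw [e1, e2, ← lintegral_trim hW.comap_le hg, ← lintegral_trim hW.comap_le hg,
    trim_eq_aux P W hW p hp hp_mem ξ hξ hξ01 hcond]

/-- Per-step second-moment identity for the centered inverse-propensity-weighted Gram
increment `H - Γ`, where `H = (ξ / p(W)) · W Wᵀ` and `Γ = E[W Wᵀ]`:
`E‖H - Γ‖_F² = E[‖W‖₂⁴ / p(W)] - ‖Γ‖_F²` (Frobenius norms written as sums of squares,
with `‖W‖₂⁴ = (Σᵢ Wᵢ²)²`).  Consequently, if `p ≥ p⋆ > 0` everywhere and `E‖W‖₂⁴ ≤ M₄`,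
then `E‖H - Γ‖_F² ≤ M₄ / p⋆`. -/
theorem ipw_gram_centered_second_moment
    {Ω : Type*} [MeasurableSpace Ω] (P : Measure Ω) [IsProbabilityMeasure P]
    {d : ℕ} (W : Ω → Fin d → ℝ) (hW : Measurable W)
    (p : (Fin d → ℝ) → ℝ) (hp : Measurable p) (hp_mem : ∀ w, p w ∈ Set.Ioc (0 : ℝ) 1)
    (ξ : Ω → ℝ) (hξ : Measurable ξ) (hξ01 : ∀ ω, ξ ω = 0 ∨ ξ ω = 1)
    (hcond : P[ξ | MeasurableSpace.comap W inferInstance] =ᵐ[P] fun ω => p (W ω))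
    (hint4 : Integrable (fun ω => (∑ i, (W ω i) ^ 2) ^ 2 / p (W ω)) P)
    (hintWW : ∀ i j, Integrable (fun ω => W ω i * W ω j) P)
    (Γ : Matrix (Fin d) (Fin d) ℝ) (hΓ : ∀ i j, Γ i j = ∫ ω, W ω i * W ω j ∂P) :
    (∫ ω, ∑ i, ∑ j, (ξ ω / p (W ω) * (W ω i * W ω j) - Γ i j) ^ 2 ∂P
        = (∫ ω, (∑ i, (W ω i) ^ 2) ^ 2 / p (W ω) ∂P) - ∑ i, ∑ j, (Γ i j) ^ 2) ∧
    (∀ pstar M₄ : ℝ, 0 < pstar → (∀ w, pstar ≤ p w) →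
      (∫ ω, (∑ i, (W ω i) ^ 2) ^ 2 ∂P) ≤ M₄ →
      ∫ ω, ∑ i, ∑ j, (ξ ω / p (W ω) * (W ω i * W ω j) - Γ i j) ^ 2 ∂P ≤ M₄ / pstar) := by
  have hp0 : ∀ w, p w ≠ 0 := fun w => (hp_mem w).1.ne'
  have hξ0 : ∀ ω, 0 ≤ ξ ω := fun ω => by rcases hξ01 ω with h | h <;> simp [h]
  -- general integrability lemma
  have Ilem : ∀ g : (Fin d → ℝ) → ℝ, Measurable g →
      Integrable (fun ω => p (W ω) * g (W ω)) P →
      Integrable (fun ω => ξ ω * g (W ω)) P := by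
    intro g hg hpg
    have habs : Integrable (fun ω => ξ ω * |g (W ω)|) P := by
      refine ⟨(hξ.mul ((hg.comp hW).abs)).aestronglyMeasurable, ?_⟩
      rw [hasFiniteIntegral_iff_ofReal (Filter.Eventually.of_forall fun ω =>
        mul_nonneg (hξ0 ω) (abs_nonneg _))]
      have key := ltower_aux P W hW p hp hp_mem ξ hξ hξ01 hcond
        (g := fun ω => ENNReal.ofReal |g (W ω)|)
        (by
          have h2 : Measurable fun w : Fin d → ℝ => ENNReal.ofReal |g w| :=
            ENNReal.measurable_ofReal.comp hg.abs
          exact h2.comp (comap_measurable W))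
      calc ∫⁻ ω, ENNReal.ofReal (ξ ω * |g (W ω)|) ∂P
          = ∫⁻ ω, ENNReal.ofReal (ξ ω) * ENNReal.ofReal |g (W ω)| ∂P :=
            lintegral_congr fun ω => ENNReal.ofReal_mul (hξ0 ω)
        _ = ∫⁻ ω, ENNReal.ofReal (p (W ω)) * ENNReal.ofReal |g (W ω)| ∂P := key
        _ = ∫⁻ ω, (‖p (W ω) * g (W ω)‖₊ : ℝ≥0∞) ∂P := by
            refine lintegral_congr fun ω => ?_
            rw [← ENNReal.ofReal_mul (hp_mem (W ω)).1.le, ← enorm_eq_nnnorm, Real.enorm_eq_ofReal_abs,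
              abs_mul, abs_of_nonneg (hp_mem (W ω)).1.le]
        _ < ⊤ := hpg.2
    refine habs.mono' (hξ.mul (hg.comp hW)).aestronglyMeasurable
      (Filter.Eventually.of_forall fun ω => ?_)
    rw [norm_mul, Real.norm_eq_abs, Real.norm_eq_abs, abs_of_nonneg (hξ0 ω)]
  -- general integral identity
  have Elem : ∀ g : (Fin d → ℝ) → ℝ, Measurable g →
      ∫ ω, ξ ω * g (W ω) ∂P = ∫ ω, p (W ω) * g (W ω) ∂P := by
    intro g hg
    have h1 : Measurable[MeasurableSpace.comap W inferInstance]
        (fun ω => g (W ω)) := hg.comp (comap_measurable W)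
    exact tower_aux P W hW p hp hp_mem ξ hξ hξ01 hcond h1.stronglyMeasurable
  -- the two integrand families
  have hgS : Measurable fun w : Fin d → ℝ => ∑ i, w i ^ 2 :=
    Finset.measurable_sum _ fun i _ => (measurable_pi_apply i).pow_const 2
  have hg₁ : Measurable fun w : Fin d → ℝ => (∑ i, w i ^ 2) ^ 2 / p w ^ 2 :=
    (hgS.pow_const 2).div (hp.pow_const 2)
  have hpg₁ : (fun ω => p (W ω) * ((∑ i, W ω i ^ 2) ^ 2 / p (W ω) ^ 2))
      = fun ω => (∑ i, W ω i ^ 2) ^ 2 / p (W ω) := by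
    funext ω; have h := hp0 (W ω); field_simp
  have IA : Integrable (fun ω => ξ ω * ((∑ i, W ω i ^ 2) ^ 2 / p (W ω) ^ 2)) P := by
    refine Ilem _ hg₁ ?_
    rw [hpg₁]; exact hint4
  have EA : ∫ ω, ξ ω * ((∑ i, W ω i ^ 2) ^ 2 / p (W ω) ^ 2) ∂P
      = ∫ ω, (∑ i, W ω i ^ 2) ^ 2 / p (W ω) ∂P := by
    rw [Elem _ hg₁, hpg₁]
  have hg₂ : ∀ i j, Measurable fun w : Fin d → ℝ => w i * w j / p w := fun i j =>
    ((measurable_pi_apply i).mul (measurable_pi_apply j)).div hp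
  have hpg₂ : ∀ i j, (fun ω => p (W ω) * (W ω i * W ω j / p (W ω)))
      = fun ω => W ω i * W ω j := by
    intro i j; funext ω; have h := hp0 (W ω); field_simp
  have IB : ∀ i j, Integrable (fun ω => ξ ω * (W ω i * W ω j / p (W ω))) P := by
    intro i j
    refine Ilem _ (hg₂ i j) ?_
    rw [hpg₂ i j]; exact hintWW i j
  have EB : ∀ i j, ∫ ω, ξ ω * (W ω i * W ω j / p (W ω)) ∂P = Γ i j := by
    intro i j
    rw [Elem _ (hg₂ i j), hpg₂ i j, ← hΓ i j]
  -- pointwise algebraic identity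
  have hpt : (fun ω => ∑ i, ∑ j, (ξ ω / p (W ω) * (W ω i * W ω j) - Γ i j) ^ 2)
      = fun ω => ξ ω * ((∑ i, W ω i ^ 2) ^ 2 / p (W ω) ^ 2)
        - 2 * ∑ i, ∑ j, Γ i j * (ξ ω * (W ω i * W ω j / p (W ω)))
        + ∑ i, ∑ j, Γ i j ^ 2 := by
    funext ω
    have hξω : ξ ω * ξ ω = ξ ω := by rcases hξ01 ω with h | h <;> rw [h] <;> ring
    have hterm : ∀ i j : Fin d, (ξ ω / p (W ω) * (W ω i * W ω j) - Γ i j) ^ 2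
        = ξ ω * ((W ω i * W ω j) ^ 2 / p (W ω) ^ 2)
          - 2 * (Γ i j * (ξ ω * (W ω i * W ω j / p (W ω)))) + Γ i j ^ 2 := by
      intro i j
      calc (ξ ω / p (W ω) * (W ω i * W ω j) - Γ i j) ^ 2
          = (ξ ω * ξ ω) * ((W ω i * W ω j) ^ 2 / p (W ω) ^ 2)
            - 2 * (Γ i j * (ξ ω * (W ω i * W ω j / p (W ω)))) + Γ i j ^ 2 := by ring
        _ = _ := by rw [hξω]
    have hS : (∑ i, W ω i ^ 2) ^ 2 = ∑ i, ∑ j, (W ω i * W ω j) ^ 2 := by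
      rw [sq, Finset.sum_mul_sum]
      exact Finset.sum_congr rfl fun i _ => Finset.sum_congr rfl fun j _ => by ring
    simp_rw [hterm]
    rw [hS]
    simp only [Finset.sum_add_distrib, Finset.sum_sub_distrib, Finset.mul_sum,
      Finset.sum_div]
  -- integrability of the cross sum
  have IB2 : Integrable
      (fun ω => ∑ i, ∑ j, Γ i j * (ξ ω * (W ω i * W ω j / p (W ω)))) P :=
    integrable_finset_sum _ fun i _ => integrable_finset_sum _ fun j _ =>
      (IB i j).const_mul _
  have hBval : ∫ ω, (∑ i, ∑ j, Γ i j * (ξ ω * (W ω i * W ω j / p (W ω)))) ∂P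
      = ∑ i, ∑ j, Γ i j ^ 2 := by
    rw [integral_finset_sum (f := fun i ω => ∑ j, Γ i j * (ξ ω * (W ω i * W ω j / p (W ω))))
      _ fun i _ => integrable_finset_sum _ fun j _ => (IB i j).const_mul _]
    refine Finset.sum_congr rfl fun i _ => ?_
    rw [integral_finset_sum (f := fun j ω => Γ i j * (ξ ω * (W ω i * W ω j / p (W ω))))
      _ fun j _ => (IB i j).const_mul _]
    refine Finset.sum_congr rfl fun j _ => ?_
    rw [integral_const_mul, EB i j, sq]
  -- part 1
  have part1 : ∫ ω, ∑ i, ∑ j, (ξ ω / p (W ω) * (W ω i * W ω j) - Γ i j) ^ 2 ∂P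
      = (∫ ω, (∑ i, W ω i ^ 2) ^ 2 / p (W ω) ∂P) - ∑ i, ∑ j, Γ i j ^ 2 := by
    have I2B : Integrable
        (fun ω => 2 * ∑ i, ∑ j, Γ i j * (ξ ω * (W ω i * W ω j / p (W ω)))) P :=
      IB2.const_mul 2
    have IAB : Integrable
        (fun ω => ξ ω * ((∑ i, W ω i ^ 2) ^ 2 / p (W ω) ^ 2)
          - 2 * ∑ i, ∑ j, Γ i j * (ξ ω * (W ω i * W ω j / p (W ω)))) P := IA.sub I2B
    rw [hpt, integral_add IAB (integrable_const _), integral_sub IA I2B]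
    have h2B : ∫ ω, 2 * (∑ i, ∑ j, Γ i j * (ξ ω * (W ω i * W ω j / p (W ω)))) ∂P
        = 2 * ∑ i, ∑ j, Γ i j ^ 2 := by rw [integral_const_mul, hBval]
    rw [h2B, EA, integral_const]
    simp only [measure_univ, ENNReal.toReal_one, one_smul, probReal_univ]
    ring
  refine ⟨part1, fun pstar M₄ hps hple hM => ?_⟩
  have hS2int : Integrable (fun ω => ((∑ i, W ω i ^ 2) ^ 2 : ℝ)) P := by
    refine hint4.mono ((hgS.pow_const 2).comp hW).aestronglyMeasurable
      (Filter.Eventually.of_forall fun ω => ?_)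
    have h1 : (0:ℝ) ≤ (∑ i, W ω i ^ 2) ^ 2 := sq_nonneg _
    have h2 := hp_mem (W ω)
    rw [Real.norm_eq_abs, Real.norm_eq_abs, abs_of_nonneg h1,
      abs_of_nonneg (div_nonneg h1 h2.1.le), le_div_iff₀ h2.1]
    exact mul_le_of_le_one_right h1 h2.2
  have step1 : ∫ ω, (∑ i, W ω i ^ 2) ^ 2 / p (W ω) ∂P
      ≤ ∫ ω, (∑ i, W ω i ^ 2) ^ 2 / pstar ∂P := by
    refine integral_mono hint4 (hS2int.div_const pstar) fun ω => ?_
    have h1 : (0:ℝ) ≤ (∑ i, W ω i ^ 2) ^ 2 := sq_nonneg _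
    gcongr
    exact hple (W ω)
  have hC : 0 ≤ ∑ i, ∑ j, (Γ i j) ^ 2 :=
    Finset.sum_nonneg fun i _ => Finset.sum_nonneg fun j _ => sq_nonneg _
  have step2 : ∫ ω, (∑ i, W ω i ^ 2) ^ 2 / pstar ∂P
      = (∫ ω, (∑ i, W ω i ^ 2) ^ 2 ∂P) / pstar := integral_div pstar _
  have step3 : (∫ ω, (∑ i, W ω i ^ 2) ^ 2 ∂P) / pstar ≤ M₄ / pstar :=
    (div_le_div_iff_of_pos_right hps).mpr hM
  rw [part1]
  linarith
end

section
/- Let λ > 0, a > 0, M ≥ 0, let (μ_j)_{j≥1} be a sequence with μ_j ∈ [0, M] for all j, and let (w_j)_{j≥1} be a real square-summable sequence. Define b_j := (λ μ_j^a / (μ_j + λ)) · w_j. Then (b_j) is square-summable and (Σ_j b_j²)^{1/2} ≤ (sup_{μ∈[0,M]} λ μ^a/(μ+λ)) · (Σ_j w_j²)^{1/2}. Moreover, setting ρ := min{a, 1} and C := a^a (1−a)^{1−a} if 0 < a ≤ 1 (with the convention 0⁰ = 1) and C := M^{a−1} if a > 1, one has (Σ_j b_j²)^{1/2} ≤ C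 · λ^ρ · (Σ_j w_j²)^{1/2}. -/
lemma tikhonov_pointwise (lam a M t : ℝ) (hlam : 0 < lam) (ha : 0 < a) (hM : 0 ≤ M)
    (ht : t ∈ Set.Icc 0 M) :
    lam * t ^ a / (t + lam) ≤
      (if a ≤ 1 then a ^ a * (1 - a) ^ (1 - a) else M ^ (a - 1)) * lam ^ (min a 1) := by
  obtain ⟨ht0, htM⟩ := ht
  have hden : 0 < t + lam := by linarith
  by_cases h1 : a ≤ 1
  · rw [if_pos h1, min_eq_left h1]
    rcases eq_or_lt_of_le h1 with heq | hlt
    · subst heq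
      simp [Real.rpow_one]
      rw [div_le_iff₀ hden]
      nlinarith
    · have h1a0 : (0:ℝ) < 1 - a := by linarith
      have haa : (0:ℝ) < a ^ a := Real.rpow_pos_of_pos ha a
      have h1aa : (0:ℝ) < (1 - a) ^ (1 - a) := Real.rpow_pos_of_pos h1a0 (1 - a)
      have hC0 : (0:ℝ) < a ^ a * (1 - a) ^ (1 - a) := by positivity
      have hAM : t ^ a * lam ^ (1 - a) ≤ (a ^ a * (1 - a) ^ (1 - a)) * (t + lam) := by
        have key := Real.geom_mean_le_arith_mean2_weighted ha.le h1a0.le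
          (div_nonneg ht0 ha.le) (div_nonneg hlam.le h1a0.le)
          (by ring : a + (1 - a) = 1)
        have e1 : (t / a) ^ a = t ^ a / a ^ a := Real.div_rpow ht0 ha.le a
        have e2 : (lam / (1 - a)) ^ (1 - a) = lam ^ (1 - a) / (1 - a) ^ (1 - a) :=
          Real.div_rpow hlam.le h1a0.le (1 - a)
        have e3 : a * (t / a) + (1 - a) * (lam / (1 - a)) = t + lam := by
          field_simp
        rw [e1, e2, e3] at key
        calc t ^ a * lam ^ (1 - a)
            = (t ^ a / a ^ a * (lam ^ (1 - a) / (1 - a) ^ (1 - a))) * (a ^ a * (1 - a) ^ (1 - a)) := by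
              field_simp
          _ ≤ (t + lam) * (a ^ a * (1 - a) ^ (1 - a)) :=
              mul_le_mul_of_nonneg_right key hC0.le
          _ = (a ^ a * (1 - a) ^ (1 - a)) * (t + lam) := by ring
      have hsplit : lam ^ a * lam ^ (1 - a) = lam := by
        rw [← Real.rpow_add hlam]; norm_num
      have hla : (0:ℝ) ≤ lam ^ a := (Real.rpow_pos_of_pos hlam a).le
      rw [div_le_iff₀ hden]
      have e : lam ^ a * (t ^ a * lam ^ (1 - a)) = lam * t ^ a := by
        rw [show lam ^ a * (t ^ a * lam ^ (1 - a)) = t ^ a * (lam ^ a * lam ^ (1 - a)) from by ring,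
          hsplit]; ring
      calc lam * t ^ a = lam ^ a * (t ^ a * lam ^ (1 - a)) := e.symm
        _ ≤ lam ^ a * ((a ^ a * (1 - a) ^ (1 - a)) * (t + lam)) :=
            mul_le_mul_of_nonneg_left hAM hla
        _ = a ^ a * (1 - a) ^ (1 - a) * lam ^ a * (t + lam) := by ring
  · push_neg at h1
    rw [if_neg (not_le.mpr h1), min_eq_right h1.le, Real.rpow_one]
    have hM1 : (0:ℝ) ≤ M ^ (a - 1) := Real.rpow_nonneg hM _
    rcases eq_or_lt_of_le ht0 with rfl | htpos
    · rw [Real.zero_rpow ha.ne']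
      have : lam * 0 / (0 + lam) = 0 := by ring
      rw [this]
      positivity
    · have hta : t ^ a = t ^ (a - 1) * t := by
        have := Real.rpow_add_one htpos.ne' (a - 1)
        rw [sub_add_cancel] at this
        exact this
      have htM' : t ^ (a - 1) ≤ M ^ (a - 1) :=
        Real.rpow_le_rpow ht0 htM (by linarith)
      rw [div_le_iff₀ hden, hta]
      nlinarith [mul_le_mul_of_nonneg_right htM' ht0,
        mul_nonneg (mul_nonneg hM1 hlam.le) hlam.le, htpos.le]


/-- Eigenbasis form of the Tikhonov regularization bias bound: if `μ_j ∈ [0, M]`, `(w_j)`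
is square-summable and `b_j = (λ μ_j^a/(μ_j + λ)) w_j`, then `(b_j)` is square-summable
with `ℓ²`-norm at most `sup_{μ ∈ [0,M]} λ μ^a/(μ+λ)` times the `ℓ²`-norm of `(w_j)`;
moreover, with `ρ = min{a,1}` and the explicit constant `C` (equal to
`a^a (1-a)^{1-a}` when `a ≤ 1`, with the convention `0⁰ = 1`, and `M^{a-1}` when `a > 1`),
the `ℓ²`-norm of `(b_j)` is at most `C λ^ρ` times that of `(w_j)`. -/
theorem tikhonov_bias_l2_bound (lam a M : ℝ) (hlam : 0 < lam) (ha : 0 < a) (hM : 0 ≤ M)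
    (μ : ℕ → ℝ) (hμ : ∀ j, μ j ∈ Set.Icc 0 M)
    (w : ℕ → ℝ) (hw : Summable fun j => (w j) ^ 2)
    (b : ℕ → ℝ) (hb : ∀ j, b j = lam * (μ j) ^ a / (μ j + lam) * w j)
    (ρ C : ℝ) (hρ : ρ = min a 1)
    (hC : C = if a ≤ 1 then a ^ a * (1 - a) ^ (1 - a) else M ^ (a - 1)) :
    Summable (fun j => (b j) ^ 2) ∧
    Real.sqrt (∑' j, (b j) ^ 2) ≤
      sSup ((fun t : ℝ => lam * t ^ a / (t + lam)) '' Set.Icc 0 M) *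
        Real.sqrt (∑' j, (w j) ^ 2) ∧
    Real.sqrt (∑' j, (b j) ^ 2) ≤ C * lam ^ ρ * Real.sqrt (∑' j, (w j) ^ 2) := by
  set g : ℝ → ℝ := fun t => lam * t ^ a / (t + lam) with hg
  set K := sSup (g '' Set.Icc 0 M) with hK
  have hpt : ∀ t ∈ Set.Icc 0 M, g t ≤ C * lam ^ ρ := by
    intro t ht
    rw [hC, hρ]
    exact tikhonov_pointwise lam a M t hlam ha hM ht
  have hgnn : ∀ t ∈ Set.Icc 0 M, 0 ≤ g t := by
    intro t ht
    have : 0 < t + lam := by linarith [ht.1]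
    have := Real.rpow_nonneg ht.1 a
    positivity
  have hbdd : BddAbove (g '' Set.Icc 0 M) := by
    refine ⟨C * lam ^ ρ, ?_⟩
    rintro y ⟨t, ht, rfl⟩
    exact hpt t ht
  have h0mem : (0:ℝ) ∈ Set.Icc 0 M := ⟨le_refl 0, hM⟩
  have hK0 : 0 ≤ K := by
    have hle := le_csSup hbdd ⟨0, h0mem, rfl⟩
    have : g 0 = 0 := by
      simp [hg, Real.zero_rpow ha.ne']
    linarith [hle, this ▸ hle]
  have hKle : K ≤ C * lam ^ ρ := by
    apply csSup_le (Set.Nonempty.image g ⟨0, h0mem⟩)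
    rintro y ⟨t, ht, rfl⟩
    exact hpt t ht
  have hgK : ∀ t ∈ Set.Icc 0 M, g t ≤ K := fun t ht => le_csSup hbdd ⟨t, ht, rfl⟩
  have hsq : ∀ j, b j ^ 2 ≤ K ^ 2 * w j ^ 2 := by
    intro j
    rw [hb j]
    have h1 := hgK (μ j) (hμ j)
    have h2 := hgnn (μ j) (hμ j)
    have : (g (μ j)) ^ 2 ≤ K ^ 2 := by nlinarith
    calc (g (μ j) * w j) ^ 2 = (g (μ j)) ^ 2 * w j ^ 2 := by ring
      _ ≤ K ^ 2 * w j ^ 2 := mul_le_mul_of_nonneg_right this (sq_nonneg _)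
  have hsumK : Summable fun j => K ^ 2 * w j ^ 2 := hw.mul_left _
  have hbsum : Summable fun j => (b j) ^ 2 :=
    Summable.of_nonneg_of_le (fun j => sq_nonneg _) hsq hsumK
  have htsum : ∑' j, (b j) ^ 2 ≤ K ^ 2 * ∑' j, (w j) ^ 2 := by
    rw [← tsum_mul_left]
    exact Summable.tsum_le_tsum hsq hbsum hsumK
  have hsqrt : Real.sqrt (∑' j, (b j) ^ 2) ≤ K * Real.sqrt (∑' j, (w j) ^ 2) := by
    calc Real.sqrt (∑' j, (b j) ^ 2) ≤ Real.sqrt (K ^ 2 * ∑' j, (w j) ^ 2) :=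
          Real.sqrt_le_sqrt htsum
      _ = K * Real.sqrt (∑' j, (w j) ^ 2) := by
          rw [Real.sqrt_mul (sq_nonneg K), Real.sqrt_sq hK0]
  refine ⟨hbsum, hsqrt, ?_⟩
  calc Real.sqrt (∑' j, (b j) ^ 2) ≤ K * Real.sqrt (∑' j, (w j) ^ 2) := hsqrt
    _ ≤ C * lam ^ ρ * Real.sqrt (∑' j, (w j) ^ 2) :=
        mul_le_mul_of_nonneg_right hKle (Real.sqrt_nonneg _)
end
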